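/- Let x₁, …, xₙ and y₁, …, yₙ be positive reals, and suppose (∏xᵢ)^{1/n} + (∏yᵢ)^{1/n} = (∏(xᵢ+yᵢ))^{1/n} (equality in the n-variable Minkowski/superadditivity inequality for geometric means). Then the vectors (x₁,…,xₙ) and (y₁,…,yₙ) are proportional. -/

import Mathlib

open Finset

/-- equality in the superadditivity of geometric means.  If
`x₁, …, xₙ, y₁, …, yₙ > 0` satisfy
`(∏ xᵢ)^{1/n} + (∏ yᵢ)^{1/n} = (∏ (xᵢ + yᵢ))^{1/n}`, then the vectors `x` and
`y` are proportional. -/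
theorem geom_mean_superadditive_equality {n : ℕ} (hn : 0 < n)
    (x y : Fin n → ℝ) (hx : ∀ i, 0 < x i) (hy : ∀ i, 0 < y i)
    (heq : (∏ i, x i) ^ ((1 : ℝ) / n) + (∏ i, y i) ^ ((1 : ℝ) / n)
      = (∏ i, (x i + y i)) ^ ((1 : ℝ) / n)) :
    ∃ t : ℝ, 0 < t ∧ y = t • x := by
  have hnR : (0 : ℝ) < n := Nat.cast_pos.mpr hn
  set S : Fin n → ℝ := fun i => x i + y i with hS
  have hSpos : ∀ i, 0 < S i := fun i => add_pos (hx i) (hy i)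
  set a : Fin n → ℝ := fun i => x i / S i with ha
  set b : Fin n → ℝ := fun i => y i / S i with hb
  have hapos : ∀ i, 0 < a i := fun i => div_pos (hx i) (hSpos i)
  have hbpos : ∀ i, 0 < b i := fun i => div_pos (hy i) (hSpos i)
  have hab : ∀ i, a i + b i = 1 := fun i => by
    simp only [ha, hb, hS, ← add_div]; exact div_self (hSpos i).ne'
  have hPx : (0:ℝ) < ∏ i, x i := Finset.prod_pos (fun i _ => hx i)
  have hPy : (0:ℝ) < ∏ i, y i := Finset.prod_pos (fun i _ => hy i)
  have hPS : (0:ℝ) < ∏ i, S i := Finset.prod_pos (fun i _ => hSpos i)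
  -- rewrite heq in terms of a, b
  have hprodA : (∏ i, a i) = (∏ i, x i) / (∏ i, S i) := by
    rw [ha]; simp [Finset.prod_div_distrib]
  have hprodB : (∏ i, b i) = (∏ i, y i) / (∏ i, S i) := by
    rw [hb]; simp [Finset.prod_div_distrib]
  have key : (∏ i, a i) ^ ((1:ℝ)/n) + (∏ i, b i) ^ ((1:ℝ)/n) = 1 := by
    rw [hprodA, hprodB, Real.div_rpow hPx.le hPS.le, Real.div_rpow hPy.le hPS.le,
      ← add_div, heq, div_self (ne_of_gt (Real.rpow_pos_of_pos hPS _))]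
  -- AM-GM for a and b with weights 1/n
  have hw : ∑ _i : Fin n, (1:ℝ)/n = 1 := by
    simp [Finset.sum_const, Finset.card_univ]
    field_simp
  have amgm : ∀ z : Fin n → ℝ, (∀ i, 0 < z i) →
      (∏ i, z i) ^ ((1:ℝ)/n) ≤ ∑ i, (1/n : ℝ) * z i := by
    intro z hz
    have := Real.geom_mean_le_arith_mean_weighted Finset.univ (fun _ => (1:ℝ)/n) z
      (fun i _ => by positivity) hw (fun i _ => (hz i).le)
    rwa [Real.finset_prod_rpow _ _ (fun i _ => (hz i).le)] at this
  have hsum : (∑ i, (1/n : ℝ) * a i) + (∑ i, (1/n : ℝ) * b i) = 1 := by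
    rw [← Finset.sum_add_distrib]
    calc (∑ i : Fin n, ((1/n : ℝ) * a i + (1/n : ℝ) * b i))
        = ∑ _i : Fin n, (1/n : ℝ) := by
          refine Finset.sum_congr rfl fun i _ => ?_
          rw [← mul_add, hab i, mul_one]
      _ = 1 := hw
  have eqA : (∏ i, a i) ^ ((1:ℝ)/n) = ∑ i, (1/n : ℝ) * a i := by
    have h1 := amgm a hapos
    have h2 := amgm b hbpos
    linarith [key, hsum]
  -- equality case of Jensen for log
  have hconst : ∀ j k : Fin n, a j = a k := by
    have hlog : Real.log (∑ i, (1/n : ℝ) • a i) ≤ ∑ i, (1/n : ℝ) • Real.log (a i) := by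
      have : Real.log ((∏ i, a i) ^ ((1:ℝ)/n)) = ∑ i, (1/n : ℝ) * Real.log (a i) := by
        rw [Real.log_rpow (Finset.prod_pos fun i _ => hapos i),
          Real.log_prod (fun i _ => (hapos i).ne'), Finset.mul_sum]
      simp only [smul_eq_mul]
      rw [← eqA, this]
    have := strictConcaveOn_log_Ioi.eq_of_map_sum_eq
      (t := Finset.univ) (w := fun _ => (1/n : ℝ)) (p := a)
      (fun i _ => by positivity) hw (fun i _ => hapos i) hlog
    intro j k
    exact this (Finset.mem_univ j) (Finset.mem_univ k)
  -- conclude proportionality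
  obtain ⟨i₀⟩ : Nonempty (Fin n) := ⟨⟨0, hn⟩⟩
  refine ⟨y i₀ / x i₀, div_pos (hy i₀) (hx i₀), ?_⟩
  funext i
  have h := hconst i i₀
  have hx0 := (hx i₀).ne'
  have hxi := (hx i).ne'
  have hS0 := (hSpos i₀).ne'
  have hSi := (hSpos i).ne'
  simp only [ha, hS] at h hS0 hSi
  simp only [Pi.smul_apply, smul_eq_mul]
  field_simp at h ⊢
  nlinarith [h]
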